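/- Let A be an n×n tridiagonal matrix with all sub- and superdiagonal entries nonzero, and let b = e_{n-1}. Then the vectors b, Ab, A²b, ..., A^{n-1}b are linearly independent; i.e., the Krylov space K_n(A, e_{n-1}) is all of ℝ^n. -/

import Mathlib

open Matrix

def krylov (n k : ℕ) (A : Matrix (Fin n) (Fin n) ℝ) (b : Fin n → ℝ) :
    Submodule ℝ (Fin n → ℝ) :=
  Submodule.span ℝ {v | ∃ m < k, v = (A ^ m).mulVec b}

def reachLE (n : ℕ) (A : Matrix (Fin n) (Fin n) ℝ) : ℕ → Fin n → Fin n → Prop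
  | 0 => fun i j => i = j
  | m + 1 => fun i j => ∃ x : Fin n, (x = i ∨ A i x ≠ 0 ∨ A x i ≠ 0) ∧ reachLE n A m x j

lemma krylov_key (n : ℕ) (hn : 0 < n) (hn1 : n - 1 < n) (A : Matrix (Fin n) (Fin n) ℝ)
    (htri : ∀ i j : Fin n, 1 < ((i : ℤ) - (j : ℤ)).natAbs → A i j = 0)
    (hsub : ∀ i : Fin n, ∀ h : (i : ℕ) + 1 < n,
      A i ⟨(i : ℕ) + 1, h⟩ ≠ 0 ∧ A ⟨(i : ℕ) + 1, h⟩ i ≠ 0) :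
    ∀ m : ℕ, m ≤ n - 1 →
      (∀ i : Fin n, (i : ℕ) + m < n - 1 →
        (A ^ m).mulVec (Pi.single (⟨n - 1, hn1⟩ : Fin n) (1 : ℝ)) i = 0) ∧
      (A ^ m).mulVec (Pi.single (⟨n - 1, hn1⟩ : Fin n) (1 : ℝ)) ⟨n - 1 - m, by omega⟩ ≠ 0 := by
  intro m
  induction m with
  | zero =>
    intro _
    constructor
    · intro i hi
      simp only [pow_zero, one_mulVec]
      apply Pi.single_eq_of_ne
      intro h
      have := congrArg (Fin.val) h
      simp at this
      omega
    · simp only [pow_zero, one_mulVec, Nat.sub_zero]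
      rw [Pi.single_eq_same]
      norm_num
  | succ m ih =>
    intro hm
    have hm' : m ≤ n - 1 := by omega
    obtain ⟨ih0, ihd⟩ := ih hm'
    set b : Fin n → ℝ := Pi.single (⟨n - 1, by omega⟩ : Fin n) (1 : ℝ) with hb
    have hpow : (A ^ (m + 1)).mulVec b = A.mulVec ((A ^ m).mulVec b) := by
      rw [pow_succ', mulVec_mulVec]
    constructor
    · intro i hi
      rw [hpow]
      show ∑ j, A i j * (A ^ m).mulVec b j = 0
      apply Finset.sum_eq_zero
      intro j _
      by_cases hj : (j : ℕ) + m < n - 1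
      · rw [ih0 j hj, mul_zero]
      · have hAij : A i j = 0 := by
          apply htri
          omega
        rw [hAij, zero_mul]
    · rw [hpow]
      show ∑ x, A _ x * (A ^ m).mulVec b x ≠ 0
      have hlt : n - 1 - (m + 1) + 1 < n := by omega
      set i : Fin n := ⟨n - 1 - (m + 1), by omega⟩ with hidef
      set j : Fin n := ⟨n - 1 - m, by omega⟩ with hjdef
      have hsum : ∑ x, A i x * (A ^ m).mulVec b x = A i j * (A ^ m).mulVec b j := by
        apply Finset.sum_eq_single
        · intro x _ hx
          by_cases hxm : (x : ℕ) + m < n - 1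
          · rw [ih0 x hxm, mul_zero]
          · have : A i x = 0 := by
              apply htri
              have hxne : (x : ℕ) ≠ n - 1 - m := by
                intro h; apply hx; rw [hjdef]; exact Fin.ext h
              simp only [hidef, hjdef, Fin.val_mk]
              omega
            rw [this, zero_mul]
        · intro h; exact absurd (Finset.mem_univ j) h
      rw [hsum]
      apply mul_ne_zero _ ihd
      have hiv : (i : ℕ) = n - 1 - (m + 1) := rfl
      have hjv : (j : ℕ) = n - 1 - m := rfl
      have hin : (i : ℕ) + 1 < n := by omega
      have hij : j = ⟨(i : ℕ) + 1, hin⟩ := by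
        apply Fin.ext
        show (j : ℕ) = (i : ℕ) + 1
        omega
      rw [hij]
      exact (hsub i hin).1

theorem stmt9 (n : ℕ) (hn : 0 < n) (A : Matrix (Fin n) (Fin n) ℝ)
    (htri : ∀ i j : Fin n, 1 < ((i : ℤ) - (j : ℤ)).natAbs → A i j = 0)
    (hsub : ∀ i : Fin n, ∀ h : (i : ℕ) + 1 < n,
      A i ⟨(i : ℕ) + 1, h⟩ ≠ 0 ∧ A ⟨(i : ℕ) + 1, h⟩ i ≠ 0) :
    LinearIndependent ℝ
      (fun m : Fin n => (A ^ (m : ℕ)).mulVec (Pi.single (⟨n - 1, by omega⟩ : Fin n) (1 : ℝ)))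
    ∧ krylov n n A (Pi.single (⟨n - 1, by omega⟩ : Fin n) (1 : ℝ)) = ⊤ := by
  set b : Fin n → ℝ := Pi.single (⟨n - 1, by omega⟩ : Fin n) (1 : ℝ) with hb
  have key := krylov_key n hn (by omega) A htri hsub
  -- the flip permutation
  have hinv : Function.Involutive (fun i : Fin n => (⟨n - 1 - (i : ℕ), by omega⟩ : Fin n)) := by
    intro i
    apply Fin.ext
    simp only
    omega
  set σ : Equiv.Perm (Fin n) := hinv.toPerm _ with hσ
  have hσval : ∀ i : Fin n, ((σ i : Fin n) : ℕ) = n - 1 - (i : ℕ) := fun i => rfl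
  set B : Matrix (Fin n) (Fin n) ℝ := Matrix.of fun m k => (A ^ (m : ℕ)).mulVec b (σ k) with hB
  have hBzero : ∀ m k : Fin n, m < k → B m k = 0 := by
    intro m k hmk
    apply (key m (by omega)).1
    have := hσval k
    simp only [Fin.lt_def] at hmk
    omega
  have hBdiag : ∀ m : Fin n, B m m ≠ 0 := by
    intro m
    exact (key m (by omega)).2
  have hdet : B.det ≠ 0 := by
    rw [Matrix.det_of_lowerTriangular B (by
      intro i j hij
      exact hBzero i j hij)]
    exact Finset.prod_ne_zero_iff.mpr fun m _ => hBdiag m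
  have hunit : IsUnit B := by
    rwa [Matrix.isUnit_iff_isUnit_det, isUnit_iff_ne_zero]
  have hliB : LinearIndependent ℝ (fun m => B m) :=
    Matrix.linearIndependent_rows_iff_isUnit.mpr hunit
  -- transfer via the coordinate permutation linear equiv
  have hli : LinearIndependent ℝ (fun m : Fin n => (A ^ (m : ℕ)).mulVec b) := by
    have heq : (fun m : Fin n => (A ^ (m : ℕ)).mulVec b)
        = fun m => (LinearEquiv.funCongrLeft ℝ ℝ σ) (B m) := by
      funext m
      funext i
      rw [LinearEquiv.funCongrLeft_apply, LinearMap.funLeft_apply]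
      exact (congrArg _ (hinv i)).symm
    rw [heq]
    exact hliB.map' (LinearEquiv.funCongrLeft ℝ ℝ σ).toLinearMap
      (LinearEquiv.funCongrLeft ℝ ℝ σ).ker
  refine ⟨hli, ?_⟩
  have hset : {v | ∃ m < n, v = (A ^ m).mulVec b} =
      Set.range (fun m : Fin n => (A ^ (m : ℕ)).mulVec b) := by
    ext v
    constructor
    · rintro ⟨m, hm, rfl⟩
      exact ⟨⟨m, hm⟩, rfl⟩
    · rintro ⟨m, rfl⟩
      exact ⟨m, m.isLt, rfl⟩
  rw [krylov, hset]
  have : Nonempty (Fin n) := ⟨⟨0, hn⟩⟩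
  apply hli.span_eq_top_of_card_eq_finrank
  simp [Module.finrank_pi]
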